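/- Let a vector-valued CSP instance with only linear constraints be given, let ε ∈ (0, 1/400), and let π1 : F^k → F^d and π2 : F^{k·m} → F^d be functions with p4 ≥ 1 − 4ε. Suppose σ : Fin k → (Fin d → F) and σ2 : Fin k × Fin m → (Fin d → F) satisfy Δ(π1, PWH(σ)) ≤ 24ε, Δ(π2, PWH(σ2)) ≤ 24ε (where σ2 is viewed as a tuple of k·m vectors in F^d), and σ2(p,e) = M_e · σ(p) for every p ∈ Fin k and e ∈ Fin m. Then σ is a solution of the instance, i.e., σ(u(e)) = M_e · σ(v(e)) for every e ∈ Fin m. -/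

import Mathlib

open scoped Classical

/-- The probability that a uniformly random element of a finite type `Ω`
satisfies the predicate `P`. -/
noncomputable def prob {Ω : Type*} [Fintype Ω] (P : Ω → Prop) : ℝ :=
  ((Finset.univ.filter P).card : ℝ) / (Fintype.card Ω : ℝ)

/-- Relative (Hamming) distance between two functions on a finite domain. -/
noncomputable def rdist {A B : Type*} [Fintype A] (f g : A → B) : ℝ :=
  prob (fun a => f a ≠ g a)

/-- The parallel Walsh–Hadamard encoding of an assignment `σ : ι → (Fin d → F)`:
`PWH σ b = ∑ i, b i • σ i`, as a function from `ι → F` to `Fin d → F`. -/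
def PWH {F : Type*} [CommRing F] {ι : Type*} [Fintype ι] {d : ℕ}
    (σ : ι → Fin d → F) : (ι → F) → (Fin d → F) :=
  fun b j => ∑ i, b i * σ i j

section helpers

variable {Ω : Type*} [Fintype Ω]

lemma prob_nonneg (P : Ω → Prop) : 0 ≤ prob P := by
  unfold prob; positivity

lemma prob_mono {P Q : Ω → Prop} (h : ∀ x, P x → Q x) : prob P ≤ prob Q := by
  unfold prob
  rcases Nat.eq_zero_or_pos (Fintype.card Ω) with h0 | h0
  · simp [h0]
  · have hc : (0:ℝ) < (Fintype.card Ω : ℝ) := by exact_mod_cast h0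
    apply (div_le_div_iff_of_pos_right hc).mpr
    exact_mod_cast Finset.card_le_card (Finset.monotone_filter_right _ (fun x _ => h x))

lemma prob_not [Nonempty Ω] (P : Ω → Prop) : prob (fun x => ¬ P x) = 1 - prob P := by
  have h : (Finset.univ.filter (fun x => ¬ P x)).card + (Finset.univ.filter P).card
      = Fintype.card Ω := by
    classical
    have := Finset.card_filter_add_card_filter_not
      (s := (Finset.univ : Finset Ω)) (p := P)
    simp only [Finset.filter_congr_decidable, Finset.card_univ] at this ⊢
    omega
  have hc : ((Fintype.card Ω : ℝ)) ≠ 0 := by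
    exact_mod_cast Fintype.card_ne_zero
  unfold prob
  rw [eq_sub_iff_add_eq, ← add_div, div_eq_one_iff_eq hc]
  norm_cast
  convert h using 3
  congr!

lemma prob_or (P Q : Ω → Prop) : prob (fun x => P x ∨ Q x) ≤ prob P + prob Q := by
  unfold prob
  rw [← add_div]
  rcases Nat.eq_zero_or_pos (Fintype.card Ω) with h0 | h0
  · simp [h0]
  · have hc : (0:ℝ) < (Fintype.card Ω : ℝ) := by exact_mod_cast h0
    apply (div_le_div_iff_of_pos_right hc).mpr
    have : (Finset.univ.filter (fun x => P x ∨ Q x)).card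
        ≤ (Finset.univ.filter P).card + (Finset.univ.filter Q).card := by
      classical
      calc (Finset.univ.filter (fun x => P x ∨ Q x)).card
          = (Finset.univ.filter P ∪ Finset.univ.filter Q).card := by
            simp only [Finset.filter_congr_decidable, ← Finset.filter_or]
        _ ≤ _ := Finset.card_union_le _ _
    norm_cast
    convert this using 3

end helpers

section comp
variable {A B C : Type*} [Fintype A] [Fintype B] [Fintype C]
  [Nonempty A] [Nonempty B] [Nonempty C]

omit [Nonempty A] [Nonempty B] [Nonempty C] in
lemma card_filter_triple (R : A × B × C → Prop) :
    (Finset.univ.filter R).card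
      = ∑ a : A, ∑ b : B, ∑ c : C, if R (a, b, c) then 1 else 0 := by
  simp only [Finset.card_filter, Fintype.sum_prod_type]

lemma prob_comp_last [AddGroup C] (P : C → Prop) (g : A → C) :
    prob (fun x : A × B × C => P (x.2.2 + g x.1)) = prob P := by
  have h1 : (Finset.univ.filter (fun x : A × B × C => P (x.2.2 + g x.1))).card
      = Fintype.card A * Fintype.card B * (Finset.univ.filter P).card := by
    rw [card_filter_triple]
    have key : ∀ a : A, ∑ c : C, (if P (c + g a) then (1:ℕ) else 0)
        = (Finset.univ.filter P).card := by
      intro a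
      rw [Finset.card_filter]
      exact Equiv.sum_comp (Equiv.addRight (g a)) (fun c => if P c then 1 else 0)
    simp only [key, Finset.sum_const, Finset.card_univ, smul_eq_mul]
    ring
  have hA : (0:ℝ) < Fintype.card A := by exact_mod_cast Fintype.card_pos
  have hB : (0:ℝ) < Fintype.card B := by exact_mod_cast Fintype.card_pos
  have hC : (0:ℝ) < Fintype.card C := by exact_mod_cast Fintype.card_pos
  unfold prob
  rw [h1, Fintype.card_prod, Fintype.card_prod]
  push_cast
  field_simp

lemma prob_comp_mid [AddGroup B] (P : B → Prop) (g : A → B) :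
    prob (fun x : A × B × C => P (x.2.1 + g x.1)) = prob P := by
  have h1 : (Finset.univ.filter (fun x : A × B × C => P (x.2.1 + g x.1))).card
      = Fintype.card A * Fintype.card C * (Finset.univ.filter P).card := by
    rw [card_filter_triple]
    have key : ∀ a : A, ∑ b : B, (if P (b + g a) then (1:ℕ) else 0)
        = (Finset.univ.filter P).card := by
      intro a
      rw [Finset.card_filter]
      exact Equiv.sum_comp (Equiv.addRight (g a)) (fun b => if P b then 1 else 0)
    have key2 : ∀ a : A, ∑ b : B, ∑ _c : C, (if P (b + g a) then (1:ℕ) else 0)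
        = Fintype.card C * (Finset.univ.filter P).card := by
      intro a
      calc ∑ b : B, ∑ _c : C, (if P (b + g a) then (1:ℕ) else 0)
          = ∑ b : B, Fintype.card C * (if P (b + g a) then (1:ℕ) else 0) := by
            simp [Finset.sum_const, mul_comm]
        _ = Fintype.card C * (Finset.univ.filter P).card := by
            rw [← Finset.mul_sum, key a]
    simp only [key2, Finset.sum_const, Finset.card_univ, smul_eq_mul]
    ring
  have hA : (0:ℝ) < Fintype.card A := by exact_mod_cast Fintype.card_pos
  have hB : (0:ℝ) < Fintype.card B := by exact_mod_cast Fintype.card_pos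
  have hC : (0:ℝ) < Fintype.card C := by exact_mod_cast Fintype.card_pos
  unfold prob
  rw [h1, Fintype.card_prod, Fintype.card_prod]
  push_cast
  field_simp

lemma prob_comp_fst (P : A → Prop) :
    prob (fun x : A × B × C => P x.1) = prob P := by
  have h1 : (Finset.univ.filter (fun x : A × B × C => P x.1)).card
      = Fintype.card B * Fintype.card C * (Finset.univ.filter P).card := by
    rw [card_filter_triple]
    have key : ∀ a : A, ∑ _b : B, ∑ _c : C, (if P a then (1:ℕ) else 0)
        = Fintype.card B * Fintype.card C * (if P a then 1 else 0) := by
      intro a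
      simp [Finset.sum_const, mul_assoc]
    simp only [key]
    rw [← Finset.mul_sum, ← Finset.card_filter]
  have hA : (0:ℝ) < Fintype.card A := by exact_mod_cast Fintype.card_pos
  have hB : (0:ℝ) < Fintype.card B := by exact_mod_cast Fintype.card_pos
  have hC : (0:ℝ) < Fintype.card C := by exact_mod_cast Fintype.card_pos
  unfold prob
  rw [h1, Fintype.card_prod, Fintype.card_prod]
  push_cast
  field_simp
end comp

lemma prob_linear_eq_zero {F : Type*} [Field F] [Fintype F] {m : ℕ}
    (w : Fin m → F) {e₀ : Fin m} (hw : w e₀ ≠ 0) :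
    prob (fun μ : Fin m → F => ∑ e, μ e * w e = 0) = 1 / Fintype.card F := by
  classical
  set E := Equiv.funSplitAt e₀ F with hE
  have hsum : ∀ μ : Fin m → F, ∑ e, μ e * w e
      = μ e₀ * w e₀ + ∑ j : {j : Fin m // j ≠ e₀}, μ j * w j := by
    intro μ
    rw [Fintype.sum_eq_add_sum_compl e₀ (fun e => μ e * w e)]
    congr 1
    exact Finset.sum_subtype _ (fun x => by simp [Finset.mem_compl, Finset.mem_singleton]) _
  have hcard : (Finset.univ.filter (fun μ : Fin m → F => ∑ e, μ e * w e = 0)).card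
      = Fintype.card ({j : Fin m // j ≠ e₀} → F) := by
    rw [Finset.card_filter]
    rw [← Equiv.sum_comp E.symm (fun μ => if (∑ e, μ e * w e = 0) then (1:ℕ) else 0)]
    rw [Fintype.sum_prod_type]
    have hone : ∀ rest : {j : Fin m // j ≠ e₀} → F,
        ∑ x : F, (if (∑ e, (E.symm (x, rest)) e * w e = 0) then (1:ℕ) else 0) = 1 := by
      intro rest
      have hval : ∀ x : F, ∑ e, (E.symm (x, rest)) e * w e
          = x * w e₀ + ∑ j : {j : Fin m // j ≠ e₀}, rest j * w j := by
        intro x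
        rw [hsum]
        congr 1
        · congr 1
          simp [hE, Equiv.funSplitAt_symm_apply]
        · apply Finset.sum_congr rfl
          intro j _
          congr 1
          simp [hE, Equiv.funSplitAt_symm_apply, j.2]
      simp only [hval]
      set s := ∑ j : {j : Fin m // j ≠ e₀}, rest j * w j with hs
      have hiff : ∀ x : F, (x * w e₀ + s = 0) ↔ (x = -s / w e₀) := by
        intro x
        rw [add_eq_zero_iff_eq_neg, eq_div_iff hw]
      have hfilt : Finset.univ.filter (fun x : F => x * w e₀ + s = 0) = {-s / w e₀} := by
        ext x
        simp [Finset.mem_filter, Finset.mem_singleton, hiff x]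
      rw [← Finset.card_filter, hfilt, Finset.card_singleton]
    rw [Finset.sum_comm]
    simp only [hone]
    simp [Finset.card_univ]
  have hN : (0:ℝ) < Fintype.card ({j : Fin m // j ≠ e₀} → F) := by
    exact_mod_cast Fintype.card_pos
  have hF : (0:ℝ) < Fintype.card F := by exact_mod_cast Fintype.card_pos
  have hdom : (Fintype.card (Fin m → F) : ℝ)
      = Fintype.card F * Fintype.card ({j : Fin m // j ≠ e₀} → F) := by
    rw_mod_cast [Fintype.card_congr E, Fintype.card_prod]
  unfold prob
  rw [hcard, hdom]
  field_simp

lemma PWH_add_sub {F : Type*} [CommRing F] {ι : Type*} [Fintype ι] {d : ℕ}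
    (σ : ι → Fin d → F) (b γ : ι → F) (j : Fin d) :
    PWH σ (b + γ) j - PWH σ b j = ∑ i, γ i * σ i j := by
  simp [PWH, add_mul, Finset.sum_add_distrib]

/-- **Constraint-test soundness** (inside the proof of Lemma 6.3).
For a vector-valued CSP instance with only linear constraints and
`ε ∈ (0, 1/400)`: if the constraint test passes with probability `p4 ≥ 1 - 4ε`,
`π1, π2` are `24ε`-close to `PWH σ` and `PWH σ2` respectively, and
`σ2 (p, e) = M e · σ p` for all `p, e`, then `σ` is a solution of the instance,
i.e. `σ (u e) = M e · σ (v e)` for every constraint `e`. -/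
theorem linear_pcpp_constraint_test {F : Type*} [Field F] [Fintype F] [CharP F 2]
    {k m d : ℕ} (hk : 1 ≤ k) (hm : 1 ≤ m) (hd : 1 ≤ d)
    (u v : Fin m → Fin k) (M : Fin m → Matrix (Fin d) (Fin d) F)
    {ε : ℝ} (hε0 : 0 < ε) (hε1 : ε < 1 / 400)
    (π1 : (Fin k → F) → (Fin d → F)) (π2 : (Fin k × Fin m → F) → (Fin d → F))
    (hp4 :
      prob (fun x : (Fin m → F) × (Fin k → F) × (Fin k × Fin m → F) =>
          π2 (x.2.2 + fun pe : Fin k × Fin m => if v pe.2 = pe.1 then x.1 pe.2 else 0)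
              - π2 x.2.2
            = π1 (x.2.1 + fun p : Fin k =>
                ∑ e ∈ Finset.univ.filter (fun e : Fin m => u e = p), x.1 e) - π1 x.2.1)
        ≥ 1 - 4 * ε)
    (σ : Fin k → Fin d → F) (σ2 : Fin k × Fin m → Fin d → F)
    (h1 : rdist π1 (PWH σ) ≤ 24 * ε) (h2 : rdist π2 (PWH σ2) ≤ 24 * ε)
    (hz : ∀ (p : Fin k) (e : Fin m), σ2 (p, e) = (M e).mulVec (σ p)) :
    ∀ e : Fin m, σ (u e) = (M e).mulVec (σ (v e)) := by
  intro e0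
  by_contra hne
  have hj : ∃ j : Fin d, σ (u e0) j ≠ (M e0).mulVec (σ (v e0)) j := by
    by_contra h
    push_neg at h
    exact hne (funext h)
  obtain ⟨j, hj⟩ := hj
  set w : Fin m → F := fun e => σ (u e) j - (M e).mulVec (σ (v e)) j with hwdef
  have hw : w e0 ≠ 0 := sub_ne_zero.mpr hj
  -- notation for the shifts
  set γ : (Fin m → F) → (Fin k × Fin m → F) :=
    fun μ => fun pe : Fin k × Fin m => if v pe.2 = pe.1 then μ pe.2 else 0 with hγ
  set lam : (Fin m → F) → (Fin k → F) :=
    fun μ => fun p : Fin k =>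
      ∑ e ∈ Finset.univ.filter (fun e : Fin m => u e = p), μ e with hlam
  -- the two sum computations
  have lhs_eq : ∀ μ : Fin m → F,
      ∑ pe : Fin k × Fin m, γ μ pe * σ2 pe j
        = ∑ e, μ e * ((M e).mulVec (σ (v e))) j := by
    intro μ
    rw [Fintype.sum_prod_type, Finset.sum_comm]
    apply Finset.sum_congr rfl
    intro e _
    simp [hγ, ite_mul, Finset.sum_ite_eq, hz]
  have rhs_eq : ∀ μ : Fin m → F,
      ∑ p, lam μ p * σ p j = ∑ e, μ e * σ (u e) j := by
    intro μ
    have step : ∀ p : Fin k, lam μ p * σ p j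
        = ∑ e ∈ Finset.univ.filter (fun e : Fin m => u e = p), μ e * σ (u e) j := by
      intro p
      rw [hlam]
      rw [Finset.sum_mul]
      apply Finset.sum_congr rfl
      intro e he
      rw [(Finset.mem_filter.1 he).2]
    rw [Finset.sum_congr rfl (fun p _ => step p)]
    exact Finset.sum_fiberwise_of_maps_to (fun e _ => Finset.mem_univ (u e)) _
  -- the events
  set E : (Fin m → F) × (Fin k → F) × (Fin k × Fin m → F) → Prop := fun x =>
      π2 (x.2.2 + fun pe : Fin k × Fin m => if v pe.2 = pe.1 then x.1 pe.2 else 0)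
          - π2 x.2.2
        = π1 (x.2.1 + fun p : Fin k =>
            ∑ e ∈ Finset.univ.filter (fun e : Fin m => u e = p), x.1 e) - π1 x.2.1 with hEdef
  set G : (Fin m → F) → Prop := fun μ => ∑ e, μ e * w e = 0 with hGdef
  -- key pointwise implication
  have key : ∀ x : (Fin m → F) × (Fin k → F) × (Fin k × Fin m → F), E x →
      π2 x.2.2 = PWH σ2 x.2.2 →
      π2 (x.2.2 + γ x.1) = PWH σ2 (x.2.2 + γ x.1) →
      π1 x.2.1 = PWH σ x.2.1 →
      π1 (x.2.1 + lam x.1) = PWH σ (x.2.1 + lam x.1) →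
      G x.1 := by
    rintro ⟨μ, a, b⟩ hE hb2 hb2' ha1 ha1'
    have hE' : PWH σ2 (b + γ μ) - PWH σ2 b = PWH σ (a + lam μ) - PWH σ a := by
      rw [← hb2, ← hb2', ← ha1, ← ha1']
      exact hE
    have hEj := congrFun hE' j
    rw [Pi.sub_apply, Pi.sub_apply, PWH_add_sub, PWH_add_sub, lhs_eq, rhs_eq] at hEj
    show ∑ e, μ e * w e = 0
    calc ∑ e, μ e * w e
        = (∑ e, μ e * σ (u e) j) - ∑ e, μ e * ((M e).mulVec (σ (v e))) j := by
          simp [hwdef, mul_sub, Finset.sum_sub_distrib]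
      _ = 0 := by rw [← hEj]; exact sub_self _
  -- probability bounds
  have hBad1 : prob (fun x : (Fin m → F) × (Fin k → F) × (Fin k × Fin m → F) =>
      π2 x.2.2 ≠ PWH σ2 x.2.2) ≤ 24 * ε := by
    have := prob_comp_last (A := Fin m → F) (B := Fin k → F)
      (fun c : Fin k × Fin m → F => π2 c ≠ PWH σ2 c) (fun _ => 0)
    simp only [add_zero] at this
    calc prob (fun x : (Fin m → F) × (Fin k → F) × (Fin k × Fin m → F) =>
          π2 x.2.2 ≠ PWH σ2 x.2.2)
        = prob (fun c : Fin k × Fin m → F => π2 c ≠ PWH σ2 c) := this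
      _ ≤ 24 * ε := h2
  have hBad2 : prob (fun x : (Fin m → F) × (Fin k → F) × (Fin k × Fin m → F) =>
      π2 (x.2.2 + γ x.1) ≠ PWH σ2 (x.2.2 + γ x.1)) ≤ 24 * ε := by
    have := prob_comp_last (A := Fin m → F) (B := Fin k → F)
      (fun c : Fin k × Fin m → F => π2 c ≠ PWH σ2 c) γ
    calc prob (fun x : (Fin m → F) × (Fin k → F) × (Fin k × Fin m → F) =>
          π2 (x.2.2 + γ x.1) ≠ PWH σ2 (x.2.2 + γ x.1))
        = prob (fun c : Fin k × Fin m → F => π2 c ≠ PWH σ2 c) := this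
      _ ≤ 24 * ε := h2
  have hBad3 : prob (fun x : (Fin m → F) × (Fin k → F) × (Fin k × Fin m → F) =>
      π1 x.2.1 ≠ PWH σ x.2.1) ≤ 24 * ε := by
    have := prob_comp_mid (A := Fin m → F) (C := Fin k × Fin m → F)
      (fun c : Fin k → F => π1 c ≠ PWH σ c) (fun _ => 0)
    simp only [add_zero] at this
    calc prob (fun x : (Fin m → F) × (Fin k → F) × (Fin k × Fin m → F) =>
          π1 x.2.1 ≠ PWH σ x.2.1)
        = prob (fun c : Fin k → F => π1 c ≠ PWH σ c) := this
      _ ≤ 24 * ε := h1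
  have hBad4 : prob (fun x : (Fin m → F) × (Fin k → F) × (Fin k × Fin m → F) =>
      π1 (x.2.1 + lam x.1) ≠ PWH σ (x.2.1 + lam x.1)) ≤ 24 * ε := by
    have := prob_comp_mid (A := Fin m → F) (C := Fin k × Fin m → F)
      (fun c : Fin k → F => π1 c ≠ PWH σ c) lam
    calc prob (fun x : (Fin m → F) × (Fin k → F) × (Fin k × Fin m → F) =>
          π1 (x.2.1 + lam x.1) ≠ PWH σ (x.2.1 + lam x.1))
        = prob (fun c : Fin k → F => π1 c ≠ PWH σ c) := this
      _ ≤ 24 * ε := h1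
  have hBadE : prob (fun x : (Fin m → F) × (Fin k → F) × (Fin k × Fin m → F) =>
      ¬ E x) ≤ 4 * ε := by
    rw [prob_not]
    have : prob E ≥ 1 - 4 * ε := hp4
    linarith
  -- union bound
  have hunion : prob (fun x : (Fin m → F) × (Fin k → F) × (Fin k × Fin m → F) =>
      ¬ G x.1) ≤ 100 * ε := by
    have hsub : ∀ x : (Fin m → F) × (Fin k → F) × (Fin k × Fin m → F), ¬ G x.1 →
        (¬ E x ∨ (π2 x.2.2 ≠ PWH σ2 x.2.2 ∨ (π2 (x.2.2 + γ x.1) ≠ PWH σ2 (x.2.2 + γ x.1)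
          ∨ (π1 x.2.1 ≠ PWH σ x.2.1 ∨ π1 (x.2.1 + lam x.1) ≠ PWH σ (x.2.1 + lam x.1))))) := by
      intro x hx
      by_contra hcon
      push_neg at hcon
      obtain ⟨c1, c2, c3, c4, c5⟩ := hcon
      exact hx (key x c1 c2 c3 c4 c5)
    calc prob (fun x : (Fin m → F) × (Fin k → F) × (Fin k × Fin m → F) => ¬ G x.1)
        ≤ prob (fun x : (Fin m → F) × (Fin k → F) × (Fin k × Fin m → F) =>
            ¬ E x ∨ (π2 x.2.2 ≠ PWH σ2 x.2.2
            ∨ (π2 (x.2.2 + γ x.1) ≠ PWH σ2 (x.2.2 + γ x.1)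
            ∨ (π1 x.2.1 ≠ PWH σ x.2.1
            ∨ π1 (x.2.1 + lam x.1) ≠ PWH σ (x.2.1 + lam x.1))))) := prob_mono hsub
      _ ≤ prob (fun x : (Fin m → F) × (Fin k → F) × (Fin k × Fin m → F) => ¬ E x)
            + prob (fun x : (Fin m → F) × (Fin k → F) × (Fin k × Fin m → F) =>
              π2 x.2.2 ≠ PWH σ2 x.2.2
            ∨ (π2 (x.2.2 + γ x.1) ≠ PWH σ2 (x.2.2 + γ x.1)
            ∨ (π1 x.2.1 ≠ PWH σ x.2.1
            ∨ π1 (x.2.1 + lam x.1) ≠ PWH σ (x.2.1 + lam x.1)))) := prob_or _ _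
      _ ≤ prob (fun x : (Fin m → F) × (Fin k → F) × (Fin k × Fin m → F) => ¬ E x)
            + (prob (fun x : (Fin m → F) × (Fin k → F) × (Fin k × Fin m → F) =>
              π2 x.2.2 ≠ PWH σ2 x.2.2)
            + prob (fun x : (Fin m → F) × (Fin k → F) × (Fin k × Fin m → F) =>
              π2 (x.2.2 + γ x.1) ≠ PWH σ2 (x.2.2 + γ x.1)
            ∨ (π1 x.2.1 ≠ PWH σ x.2.1
            ∨ π1 (x.2.1 + lam x.1) ≠ PWH σ (x.2.1 + lam x.1)))) := by
          gcongr
          exact prob_or _ _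
      _ ≤ prob (fun x : (Fin m → F) × (Fin k → F) × (Fin k × Fin m → F) => ¬ E x)
            + (prob (fun x : (Fin m → F) × (Fin k → F) × (Fin k × Fin m → F) =>
              π2 x.2.2 ≠ PWH σ2 x.2.2)
            + (prob (fun x : (Fin m → F) × (Fin k → F) × (Fin k × Fin m → F) =>
              π2 (x.2.2 + γ x.1) ≠ PWH σ2 (x.2.2 + γ x.1))
            + prob (fun x : (Fin m → F) × (Fin k → F) × (Fin k × Fin m → F) =>
              π1 x.2.1 ≠ PWH σ x.2.1
            ∨ π1 (x.2.1 + lam x.1) ≠ PWH σ (x.2.1 + lam x.1)))) := by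
          gcongr
          exact prob_or _ _
      _ ≤ prob (fun x : (Fin m → F) × (Fin k → F) × (Fin k × Fin m → F) => ¬ E x)
            + (prob (fun x : (Fin m → F) × (Fin k → F) × (Fin k × Fin m → F) =>
              π2 x.2.2 ≠ PWH σ2 x.2.2)
            + (prob (fun x : (Fin m → F) × (Fin k → F) × (Fin k × Fin m → F) =>
              π2 (x.2.2 + γ x.1) ≠ PWH σ2 (x.2.2 + γ x.1))
            + (prob (fun x : (Fin m → F) × (Fin k → F) × (Fin k × Fin m → F) =>
              π1 x.2.1 ≠ PWH σ x.2.1)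
            + prob (fun x : (Fin m → F) × (Fin k → F) × (Fin k × Fin m → F) =>
              π1 (x.2.1 + lam x.1) ≠ PWH σ (x.2.1 + lam x.1))))) := by
          gcongr
          exact prob_or _ _
      _ ≤ 4 * ε + (24 * ε + (24 * ε + (24 * ε + 24 * ε))) := by
          gcongr
      _ = 100 * ε := by ring
  -- probability of G is 1/|F|
  have hGprob : prob (fun x : (Fin m → F) × (Fin k → F) × (Fin k × Fin m → F) =>
      G x.1) = 1 / Fintype.card F := by
    rw [prob_comp_fst (B := Fin k → F) (C := Fin k × Fin m → F) G]
    exact prob_linear_eq_zero w hw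
  have hnotG : prob (fun x : (Fin m → F) × (Fin k → F) × (Fin k × Fin m → F) =>
      ¬ G x.1) = 1 - 1 / Fintype.card F := by
    rw [prob_not (fun x : (Fin m → F) × (Fin k → F) × (Fin k × Fin m → F) => G x.1), hGprob]
  have hF2 : (2:ℝ) ≤ Fintype.card F := by exact_mod_cast Fintype.one_lt_card
  have hinv : 1 / (Fintype.card F : ℝ) ≤ 1 / 2 :=
    one_div_le_one_div_of_le (by norm_num) hF2
  rw [hnotG] at hunion
  linarith
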